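/- Let f : ℝ → ℝ be continuous and let g : ℝ → ℝ be a bounded C² solution of g'' + f(g) = 0 on ℝ which is monotone nondecreasing. Then the limits g₋ = lim_{t→-∞} g(t) and g₊ = lim_{t→+∞} g(t) exist, lim_{t→±∞} g'(t) = 0, and f(g₋) = f(g₊) = 0. -/

import Mathlib

open Filter

/-- If `h` tends to a finite limit at `+∞` and `deriv h` tends to `c`, then `c = 0`. -/
lemma deriv_lim_zero_atTop (h : ℝ → ℝ) (hd : Differentiable ℝ h) {a c : ℝ}
    (h1 : Tendsto h atTop (nhds a)) (h2 : Tendsto (deriv h) atTop (nhds c)) : c = 0 := by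
  have key : ∀ t : ℝ, ∃ ξ ∈ Set.Ioo t (t + 1), deriv h ξ = h (t + 1) - h t := by
    intro t
    obtain ⟨ξ, hξ, hξ'⟩ := exists_deriv_eq_slope h (by linarith : t < t + 1)
      hd.continuous.continuousOn hd.differentiableOn
    exact ⟨ξ, hξ, by rw [hξ']; ring_nf⟩
  choose ξ hξmem hξeq using key
  have hξtop : Tendsto ξ atTop atTop :=
    tendsto_atTop_mono (fun t => (hξmem t).1.le) tendsto_id
  have l1 : Tendsto (fun t => deriv h (ξ t)) atTop (nhds c) := h2.comp hξtop
  have l2 : Tendsto (fun t => deriv h (ξ t)) atTop (nhds 0) := by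
    simp only [hξeq]
    have ha : Tendsto (fun t : ℝ => h (t + 1)) atTop (nhds a) :=
      h1.comp (tendsto_atTop_add_const_right atTop 1 tendsto_id)
    simpa using ha.sub h1
  exact tendsto_nhds_unique l1 l2

/-- If `h` tends to a finite limit at `-∞` and `deriv h` tends to `c`, then `c = 0`. -/
lemma deriv_lim_zero_atBot (h : ℝ → ℝ) (hd : Differentiable ℝ h) {a c : ℝ}
    (h1 : Tendsto h atBot (nhds a)) (h2 : Tendsto (deriv h) atBot (nhds c)) : c = 0 := by
  have key : ∀ t : ℝ, ∃ ξ ∈ Set.Ioo (t - 1) t, deriv h ξ = h t - h (t - 1) := by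
    intro t
    obtain ⟨ξ, hξ, hξ'⟩ := exists_deriv_eq_slope h (by linarith : t - 1 < t)
      hd.continuous.continuousOn hd.differentiableOn
    exact ⟨ξ, hξ, by rw [hξ']; ring_nf⟩
  choose ξ hξmem hξeq using key
  have hξbot : Tendsto ξ atBot atBot :=
    tendsto_atBot_mono (fun t => (hξmem t).2.le) tendsto_id
  have l1 : Tendsto (fun t => deriv h (ξ t)) atBot (nhds c) := h2.comp hξbot
  have l2 : Tendsto (fun t => deriv h (ξ t)) atBot (nhds 0) := by
    simp only [hξeq]
    have ha : Tendsto (fun t : ℝ => h (t - 1)) atBot (nhds a) :=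
      h1.comp (tendsto_atBot_add_const_right atBot (-1) tendsto_id)
    simpa using h1.sub ha
  exact tendsto_nhds_unique l1 l2

theorem bounded_monotone_ode_limits
    (f g : ℝ → ℝ) (hf : Continuous f) (hg : ContDiff ℝ 2 g)
    (hode : ∀ t, deriv (deriv g) t + f (g t) = 0)
    (hbdd : ∃ M : ℝ, ∀ t, |g t| ≤ M)
    (hmono : Monotone g) :
    ∃ gm gp : ℝ,
      Tendsto g atBot (nhds gm) ∧ Tendsto g atTop (nhds gp) ∧
      Tendsto (deriv g) atBot (nhds 0) ∧ Tendsto (deriv g) atTop (nhds 0) ∧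
      f gm = 0 ∧ f gp = 0 := by
  obtain ⟨M, hM⟩ := hbdd
  -- differentiability facts
  have hgd : Differentiable ℝ g := hg.differentiable (by norm_num)
  have hg2 : ContDiff ℝ ((1 : ℕ∞) + 1) g := by norm_num; exact hg
  have hgd2 : Differentiable ℝ (deriv g) :=
    ((contDiff_succ_iff_deriv.mp hg2).2.2).differentiable (by norm_num)
  -- limits of g
  have hbddA : BddAbove (Set.range g) := ⟨M, by rintro _ ⟨t, rfl⟩; exact (abs_le.1 (hM t)).2⟩
  have hbddB : BddBelow (Set.range g) := ⟨-M, by rintro _ ⟨t, rfl⟩; exact (abs_le.1 (hM t)).1⟩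
  set gp := ⨆ t, g t with hgp
  set gm := ⨅ t, g t with hgm
  have hTop : Tendsto g atTop (nhds gp) := tendsto_atTop_ciSup hmono hbddA
  have hBot : Tendsto g atBot (nhds gm) := tendsto_atBot_ciInf hmono hbddB
  -- deriv g is nonnegative
  have hder_nonneg : ∀ t, 0 ≤ deriv g t := by
    intro t
    have h := ((hgd t).hasDerivAt.hasDerivWithinAt (s := Set.Ioi t))
    rw [hasDerivWithinAt_iff_tendsto_slope] at h
    rw [Set.diff_singleton_eq_self (by simp)] at h
    refine ge_of_tendsto h ?_
    filter_upwards [self_mem_nhdsWithin] with x hx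
    have hx' : t < x := hx
    have h0 : 0 ≤ (g x - g t) / (x - t) :=
      div_nonneg (sub_nonneg.2 (hmono hx'.le)) (by linarith)
    simpa [slope_def_field] using h0
  -- antiderivative F of f
  set F : ℝ → ℝ := fun x => ∫ s in (0:ℝ)..x, f s with hFdef
  have hFd : ∀ x, HasDerivAt F (f x) x := fun x =>
    (hf.integral_hasStrictDerivAt 0 x).hasDerivAt
  have hFdiff : Differentiable ℝ F := fun x => (hFd x).differentiableAt
  have hFc : Continuous F := hFdiff.continuous
  -- energy is constant
  set E : ℝ → ℝ := fun t => (deriv g t) ^ 2 / 2 + F (g t) with hEdef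
  have hE : ∀ t, HasDerivAt E 0 t := by
    intro t
    have h1 : HasDerivAt (fun t => (deriv g t) ^ 2 / 2)
        (2 * deriv g t ^ 1 * deriv (deriv g) t / 2) t :=
      ((hgd2 t).hasDerivAt.pow 2).div_const 2
    have h2 : HasDerivAt (fun t => F (g t)) (f (g t) * deriv g t) t :=
      (hFd (g t)).comp t (hgd t).hasDerivAt
    have := h1.add h2
    have hode' : deriv (deriv g) t = -f (g t) := by linarith [hode t]
    refine this.congr_deriv ?_
    rw [hode']; ring
  have hEconst : ∀ t, E t = E 0 := fun t =>
    is_const_of_deriv_eq_zero (fun s => (hE s).differentiableAt)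
      (fun s => (hE s).deriv) t 0
  set C := E 0 with hC
  have hsq : ∀ t, deriv g t = Real.sqrt (2 * (C - F (g t))) := by
    intro t
    have h := hEconst t
    have : (deriv g t) ^ 2 = 2 * (C - F (g t)) := by
      simp only [hEdef] at h ⊢
      clear_value C E
      linarith
    rw [← this, Real.sqrt_sq (hder_nonneg t)]
  -- limits of deriv g
  have hsqrtTop : Tendsto (deriv g) atTop (nhds (Real.sqrt (2 * (C - F gp)))) := by
    have : Tendsto (fun t => Real.sqrt (2 * (C - F (g t)))) atTop
        (nhds (Real.sqrt (2 * (C - F gp)))) :=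
      (Real.continuous_sqrt.tendsto _).comp
        (((tendsto_const_nhds.sub ((hFc.tendsto gp).comp hTop)).const_mul 2))
    exact this.congr fun t => (hsq t).symm
  have hsqrtBot : Tendsto (deriv g) atBot (nhds (Real.sqrt (2 * (C - F gm)))) := by
    have : Tendsto (fun t => Real.sqrt (2 * (C - F (g t)))) atBot
        (nhds (Real.sqrt (2 * (C - F gm)))) :=
      (Real.continuous_sqrt.tendsto _).comp
        (((tendsto_const_nhds.sub ((hFc.tendsto gm).comp hBot)).const_mul 2))
    exact this.congr fun t => (hsq t).symm
  have hLtop : Real.sqrt (2 * (C - F gp)) = 0 := deriv_lim_zero_atTop g hgd hTop hsqrtTop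
  have hLbot : Real.sqrt (2 * (C - F gm)) = 0 := deriv_lim_zero_atBot g hgd hBot hsqrtBot
  have hdTop : Tendsto (deriv g) atTop (nhds 0) := hLtop ▸ hsqrtTop
  have hdBot : Tendsto (deriv g) atBot (nhds 0) := hLbot ▸ hsqrtBot
  -- second derivative limits give f gp = f gm = 0
  have hode' : ∀ t, deriv (deriv g) t = -f (g t) := fun t => by linarith [hode t]
  have hd2Top : Tendsto (deriv (deriv g)) atTop (nhds (-f gp)) := by
    have : Tendsto (fun t => -f (g t)) atTop (nhds (-f gp)) :=
      (((hf.tendsto gp).comp hTop)).neg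
    exact this.congr fun t => (hode' t).symm
  have hd2Bot : Tendsto (deriv (deriv g)) atBot (nhds (-f gm)) := by
    have : Tendsto (fun t => -f (g t)) atBot (nhds (-f gm)) :=
      (((hf.tendsto gm).comp hBot)).neg
    exact this.congr fun t => (hode' t).symm
  have hfp : -f gp = 0 := deriv_lim_zero_atTop (deriv g) hgd2 hdTop hd2Top
  have hfm : -f gm = 0 := deriv_lim_zero_atBot (deriv g) hgd2 hdBot hd2Bot
  exact ⟨gm, gp, hBot, hTop, hdBot, hdTop, by linarith, by linarith⟩
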